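/- Let ν ≥ 0 and let w : ℤ × ℝ → ℂ be any function. Define W(t,k,η) = w(k, η + k·t) · exp(−ν ∫₀ᵗ (k² + (η + k·s)²) ds), and the stream-function mode Ψ(t,k,η) = W(t,k,η)/(k² + η²). Then for every integer k with |k| ≥ 1, every η ∈ ℝ, and every t ≥ 0, (1 + t²)·|Ψ(t,k,η)| ≤ 4·(1 + (η + k·t)²)·|w(k, η + k·t)|. -/

import Mathlib

/-- Pointwise inviscid damping for the stream-function mode
`Ψ(t,k,η) = W(t,k,η)/(k² + η²)`:
`(1 + t²) |Ψ(t,k,η)| ≤ 4 (1 + (η + k t)²) |w(k, η + k t)|` for `|k| ≥ 1`, `t ≥ 0`. -/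
theorem stmt_5 (ν : ℝ) (hν : 0 ≤ ν) (w : ℤ × ℝ → ℂ)
    (W Ψ : ℝ → ℤ → ℝ → ℂ)
    (hW : ∀ (t : ℝ) (k : ℤ) (η : ℝ), W t k η =
      w (k, η + (k : ℝ) * t) *
        (Real.exp (-ν * ∫ s in (0:ℝ)..t, ((k : ℝ) ^ 2 + (η + (k : ℝ) * s) ^ 2)) : ℂ))
    (hΨ : ∀ (t : ℝ) (k : ℤ) (η : ℝ), Ψ t k η =
      W t k η / (((k : ℝ) ^ 2 + η ^ 2 : ℝ) : ℂ)) :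
    ∀ (k : ℤ), 1 ≤ |k| → ∀ (η t : ℝ), 0 ≤ t →
      (1 + t ^ 2) * ‖Ψ t k η‖
        ≤ 4 * (1 + (η + (k : ℝ) * t) ^ 2) * ‖w (k, η + (k : ℝ) * t)‖ := by
  intro k hk η t ht
  have hk2 : (1:ℝ) ≤ (k:ℝ)^2 := by
    have h1 : (1:ℤ) ≤ k^2 := by nlinarith [sq_abs k, hk]
    exact_mod_cast h1
  have hD : (0:ℝ) < (k:ℝ)^2 + η^2 := by positivity
  have hI : 0 ≤ ∫ s in (0:ℝ)..t, ((k:ℝ)^2 + (η + (k:ℝ)*s)^2) :=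
    intervalIntegral.integral_nonneg ht (fun s _ => by positivity)
  set E := Real.exp (-ν * ∫ s in (0:ℝ)..t, ((k:ℝ)^2 + (η + (k:ℝ)*s)^2)) with hEdef
  have hE1 : E ≤ 1 := Real.exp_le_one_iff.mpr (by nlinarith)
  have hE0 : 0 ≤ E := Real.exp_nonneg _
  set b := η + (k:ℝ)*t with hb
  set A := ‖w (k, b)‖ with hA
  have hA0 : 0 ≤ A := norm_nonneg _
  have habs : ‖Ψ t k η‖ = A * E / ((k:ℝ)^2 + η^2) := by
    rw [hΨ, hW, norm_div, norm_mul, Complex.norm_real, Complex.norm_real, Real.norm_eq_abs, Real.norm_eq_abs,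
      abs_of_nonneg hE0, abs_of_pos hD]
  rw [habs]
  have hkt : (b - η)^2 = (k:ℝ)^2 * t^2 := by rw [hb]; ring
  have key : (1 + t^2) ≤ 4 * (1 + b^2) * ((k:ℝ)^2 + η^2) := by
    nlinarith [sq_nonneg t, sq_nonneg (b - η), sq_nonneg (b + η), sq_nonneg (b*η),
      sq_nonneg b, sq_nonneg η, mul_nonneg (sq_nonneg b) (sq_nonneg η)]
  have step1 : (1 + t^2) * (A * E / ((k:ℝ)^2 + η^2))
      ≤ (1 + t^2) * (A / ((k:ℝ)^2 + η^2)) := by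
    gcongr
    nlinarith
  refine step1.trans ?_
  rw [mul_div_assoc', div_le_iff₀ hD]
  nlinarith [mul_le_mul_of_nonneg_right key hA0, mul_nonneg hA0 (le_of_lt hD)]
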